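/- For n = 4m+2 with m a positive integer, let Δ_{n,n-4} be the triangle-based graph with n vertices and n−4 cut vertices in which the pendant path orders attached to the triangle are as equal as possible (orders determined by q = ⌊(n−3)/4⌋ and the residue of n−3 mod 4, with the longer paths at v2 first, then v1, then v0), and Ω_{n,n-4} the square v0v1v2v3 with pendant paths of orders m+1, m+1, m, m at v0, v1, v2, v3. Then N(Ω_{n,n-4}) − N(Δ_{n,n-4}) = m(m² + m − 1) > 0. -/

import Mathlib

open SimpleGraph

/-- Number of (nonempty) connected induced subgraphs of `G`. -/
noncomputable def numCIS {V : Type*} (G : SimpleGraph V) : ℕ :=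
  Nat.card {s : Finset V // s.Nonempty ∧ (G.induce (↑s : Set V)).Connected}

/-- Number of connected induced subgraphs of `G` containing the vertex `v`. -/
noncomputable def numCISat {V : Type*} (G : SimpleGraph V) (v : V) : ℕ :=
  Nat.card {s : Finset V // v ∈ s ∧ (G.induce (↑s : Set V)).Connected}

/-- Number of connected induced subgraphs of `G` containing both `u` and `v`. -/
noncomputable def numCISat2 {V : Type*} (G : SimpleGraph V) (u v : V) : ℕ :=
  Nat.card {s : Finset V // u ∈ s ∧ v ∈ s ∧ (G.induce (↑s : Set V)).Connected}

/-- The cycle `C_g` together with `k` pendant paths: the `i`-th pendant path has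
`len i` new vertices and is attached at the cycle vertex `att i`. -/
def cyclePendants (g k : ℕ) (att : Fin k → Fin g) (len : Fin k → ℕ) :
    SimpleGraph (Fin g ⊕ Σ i : Fin k, Fin (len i)) :=
  SimpleGraph.fromRel (fun a b =>
    (∃ x y : Fin g, a = Sum.inl x ∧ b = Sum.inl y ∧ ((x : ℕ) + 1) % g = (y : ℕ)) ∨
    (∃ (i : Fin k) (p q : Fin (len i)), a = Sum.inr ⟨i, p⟩ ∧ b = Sum.inr ⟨i, q⟩ ∧
      (p : ℕ) + 1 = (q : ℕ)) ∨
    (∃ (i : Fin k) (h : 0 < len i), a = Sum.inl (att i) ∧ b = Sum.inr ⟨i, ⟨0, h⟩⟩))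


section adj
variable {g k : ℕ} {att : Fin k → Fin g} {len : Fin k → ℕ}

lemma adj_inl_inl {x y : Fin g} :
    (cyclePendants g k att len).Adj (Sum.inl x) (Sum.inl y) ↔
      x ≠ y ∧ (((x : ℕ) + 1) % g = (y : ℕ) ∨ ((y : ℕ) + 1) % g = (x : ℕ)) := by
  simp [cyclePendants, fromRel_adj]

lemma adj_inl_inr {x : Fin g} {i : Fin k} {p : Fin (len i)} :
    (cyclePendants g k att len).Adj (Sum.inl x) (Sum.inr ⟨i, p⟩) ↔
      x = att i ∧ (p : ℕ) = 0 := by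
  simp only [cyclePendants, fromRel_adj]
  constructor
  · rintro ⟨-, h | h⟩ <;> simp_all <;> aesop
  · rintro ⟨rfl, hp⟩
    have hq : p = ⟨0, p.pos⟩ := Fin.ext (by simpa using hp)
    exact ⟨by simp, Or.inl (Or.inr (Or.inr ⟨i, p.pos, rfl, by rw [hq]⟩))⟩

lemma adj_inr_inr {i j : Fin k} {p : Fin (len i)} {q : Fin (len j)} :
    (cyclePendants g k att len).Adj (Sum.inr ⟨i, p⟩) (Sum.inr ⟨j, q⟩) ↔
      i = j ∧ ((p : ℕ) + 1 = (q : ℕ) ∨ (q : ℕ) + 1 = (p : ℕ)) := by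
  simp only [cyclePendants, fromRel_adj]
  constructor
  · rintro ⟨hne, h | h⟩ <;> rcases h with ⟨a, b, h1, h2, h3⟩ | ⟨i', p', q', h1, h2, h3⟩ | ⟨i', hi', h1, h2⟩ <;> simp_all <;> aesop
  · rintro ⟨rfl, h | h⟩
    · refine ⟨?_, Or.inl (Or.inr (Or.inl ⟨i, p, q, rfl, rfl, h⟩))⟩
      intro hh
      simp only [Sum.inr.injEq] at hh
      have := congrArg (fun s : (Σ i, Fin (len i)) => (s.2 : ℕ)) hh
      simp only at this; omega
    · refine ⟨?_, Or.inr (Or.inr (Or.inl ⟨i, q, p, rfl, rfl, h⟩))⟩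
      intro hh
      simp only [Sum.inr.injEq] at hh
      have := congrArg (fun s : (Σ i, Fin (len i)) => (s.2 : ℕ)) hh
      simp only at this; omega
end adj

section generic
variable {V : Type*} {G : SimpleGraph V}

lemma walk_cross {A : Set V} : ∀ {u v : V}, G.Walk u v → u ∈ A → v ∉ A →
    ∃ x ∈ A, ∃ y ∉ A, G.Adj x y := by
  intro u v p
  induction p with
  | nil => intro h h'; exact absurd h h'
  | @cons a b c hab p ih =>
    intro ha hc
    by_cases hb : b ∈ A
    · exact ih hb hc
    · exact ⟨a, ha, b, hb, hab⟩

/-- If `G.induce s` is connected and `s` meets both `A` and its complement, there is an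
edge of `G` crossing the boundary of `A` within `s`. -/
lemma induce_cross {s : Set V} (h : (G.induce s).Connected) {A : Set V} {a b : V}
    (ha : a ∈ s) (haA : a ∈ A) (hb : b ∈ s) (hbA : b ∉ A) :
    ∃ x, x ∈ s ∧ x ∈ A ∧ ∃ y, y ∈ s ∧ y ∉ A ∧ G.Adj x y := by
  obtain ⟨w⟩ := h.preconnected ⟨a, ha⟩ ⟨b, hb⟩
  have := walk_cross (A := {x : s | (x : V) ∈ A}) w haA hbA
  obtain ⟨x, hx, y, hy, hxy⟩ := this
  exact ⟨x, x.2, hx, y, y.2, hy, hxy⟩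

lemma induce_singleton_connected (v : V) : (G.induce {v}).Connected := by
  rw [connected_iff_exists_forall_reachable]
  refine ⟨⟨v, rfl⟩, ?_⟩
  rintro ⟨w, hw⟩
  cases hw
  rfl

/-- Adding a vertex adjacent to a vertex of a connected set keeps it connected. -/
lemma induce_insert_connected {s : Set V} (h : (G.induce s).Connected) {v w : V}
    (hw : w ∈ s) (hadj : G.Adj v w) : (G.induce (insert v s)).Connected := by
  have := connected_induce_union (induce_singleton_connected (G := G) v).preconnected h.preconnected rfl hw hadj
  rwa [Set.singleton_union] at this

lemma reachable_closed {s : Set V} {u : V} {x y : V} (hx : x ∈ s) (hy : y ∈ s)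
    (hxy : G.Adj x y) (hu : u ∈ s)
    (hr : (G.induce s).Reachable ⟨u, hu⟩ ⟨x, hx⟩) :
    (G.induce s).Reachable ⟨u, hu⟩ ⟨y, hy⟩ :=
  hr.trans (Adj.reachable (by exact hxy))

end generic
open Finset
section core
variable {g k : ℕ} {att : Fin k → Fin g} {len : Fin k → ℕ}

local notation "V'" => (Fin g ⊕ Σ i : Fin k, Fin (len i))

open Classical in
/-- interval on path `i` from level `a` to level `b` (inclusive). -/
noncomputable def buildA (i : Fin k) (a b : ℕ) : Finset V' :=
  univ.filter fun v => ∃ j : Fin k, ∃ p : Fin (len j), v = Sum.inr ⟨j, p⟩ ∧ j = i ∧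
    a ≤ (p : ℕ) ∧ (p : ℕ) ≤ b

open Classical in
/-- cycle vertices in `S` together with a prefix of `c i` vertices of path `i`. -/
noncomputable def buildB (S : Finset (Fin g)) (c : Fin k → ℕ) : Finset V' :=
  univ.filter fun v => (∃ x : Fin g, v = Sum.inl x ∧ x ∈ S) ∨
    (∃ j : Fin k, ∃ p : Fin (len j), v = Sum.inr ⟨j, p⟩ ∧ (p : ℕ) < c j)

lemma inr_eq_inr {i j : Fin k} {p : Fin (len i)} {q : Fin (len j)} :
    (Sum.inr ⟨i, p⟩ : V') = Sum.inr ⟨j, q⟩ ↔ i = j ∧ (p : ℕ) = (q : ℕ) := by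
  constructor
  · intro h
    simp only [Sum.inr.injEq] at h
    refine ⟨congrArg Sigma.fst h, congrArg (fun s : (Σ i, Fin (len i)) => (s.2 : ℕ)) h⟩
  · rintro ⟨rfl, h⟩
    simp [Fin.ext_iff, h]

lemma mem_buildA_inl {i : Fin k} {a b : ℕ} {x : Fin g} :
    (Sum.inl x : V') ∉ buildA i a b := by
  simp [buildA]

lemma mem_buildA_inr {i j : Fin k} {a b : ℕ} {p : Fin (len j)} :
    (Sum.inr ⟨j, p⟩ : V') ∈ buildA i a b ↔ j = i ∧ a ≤ (p : ℕ) ∧ (p : ℕ) ≤ b := by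
  simp only [buildA, mem_filter, mem_univ, true_and]
  constructor
  · rintro ⟨j', p', he, rfl, h1, h2⟩
    obtain ⟨rfl, hv⟩ := inr_eq_inr.mp he
    exact ⟨rfl, by omega, by omega⟩
  · rintro ⟨rfl, h1, h2⟩
    exact ⟨j, p, rfl, rfl, h1, h2⟩

lemma mem_buildB_inl {S : Finset (Fin g)} {c : Fin k → ℕ} {x : Fin g} :
    (Sum.inl x : V') ∈ buildB S c ↔ x ∈ S := by
  simp [buildB]

lemma mem_buildB_inr {S : Finset (Fin g)} {c : Fin k → ℕ} {j : Fin k} {p : Fin (len j)} :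
    (Sum.inr ⟨j, p⟩ : V') ∈ buildB S c ↔ (p : ℕ) < c j := by
  simp only [buildB, mem_filter, mem_univ, true_and]
  constructor
  · rintro (⟨x, hx, -⟩ | ⟨j', p', he, h⟩)
    · exact absurd hx (by simp)
    · obtain ⟨rfl, hv⟩ := inr_eq_inr.mp he
      omega
  · intro h
    exact Or.inr ⟨j, p, rfl, h⟩

end core

section core2
variable {g k : ℕ} {att : Fin k → Fin g} {len : Fin k → ℕ}
local notation "V'" => (Fin g ⊕ Σ i : Fin k, Fin (len i))
local notation "G'" => cyclePendants g k att len

lemma connA (i : Fin k) (a b : ℕ) (hab : a ≤ b) (hb : b < len i) :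
    ((G').induce ↑(buildA (g := g) (len := len) i a b)).Connected := by
  obtain ⟨d, rfl⟩ : ∃ d, b = a + d := ⟨b - a, by omega⟩
  clear hab
  induction d with
  | zero =>
    simp only [Nat.add_zero] at hb ⊢
    have : (↑(buildA (g := g) (len := len) i a a) : Set V') = {Sum.inr ⟨i, ⟨a, hb⟩⟩} := by
      ext v
      simp only [Finset.mem_coe, Set.mem_singleton_iff]
      obtain (x | ⟨j, p⟩) := v
      · simp [mem_buildA_inl]
      · rw [mem_buildA_inr, inr_eq_inr]
        constructor
        · rintro ⟨rfl, h1, h2⟩; exact ⟨rfl, by simp; omega⟩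
        · rintro ⟨rfl, h⟩; simp only [Fin.val_mk] at h; exact ⟨rfl, by omega, by omega⟩
    rw [this]
    exact induce_singleton_connected _
  | succ d ih =>
    simp only [← Nat.add_assoc] at hb ⊢
    have hb' : a + d < len i := by omega
    have hstep : (↑(buildA (g := g) (len := len) i a (a + d + 1)) : Set V') =
        insert (Sum.inr ⟨i, ⟨a + d + 1, hb⟩⟩) ↑(buildA (g := g) (len := len) i a (a + d)) := by
      ext v
      simp only [Finset.mem_coe, Set.mem_insert_iff]
      obtain (x | ⟨j, p⟩) := v
      · simp [mem_buildA_inl]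
      · rw [mem_buildA_inr, mem_buildA_inr, inr_eq_inr]
        constructor
        · rintro ⟨rfl, h1, h2⟩
          rcases Nat.lt_or_ge (p : ℕ) (a + d + 1) with h | h
          · exact Or.inr ⟨rfl, by omega, by omega⟩
          · exact Or.inl ⟨rfl, by simp only [Fin.val_mk]; omega⟩
        · rintro (⟨rfl, h⟩ | ⟨rfl, h1, h2⟩)
          · simp only [Fin.val_mk] at h; exact ⟨rfl, by omega, by omega⟩
          · exact ⟨rfl, by omega, by omega⟩
    show ((G').induce ↑(buildA (g := g) (len := len) i a (a + d + 1))).Connected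
    rw [hstep]
    refine induce_insert_connected (ih hb') (w := Sum.inr ⟨i, ⟨a + d, hb'⟩⟩) ?_ ?_
    · rw [Finset.mem_coe, mem_buildA_inr]
      exact ⟨rfl, by simp only [Fin.val_mk]; omega, by simp only [Fin.val_mk]; omega⟩
    · rw [adj_inr_inr]
      exact ⟨rfl, by simp⟩

lemma connB (S : Finset (Fin g)) (c : Fin k → ℕ) (hS : S.Nonempty)
    (hconn : ((G').induce (Sum.inl '' (S : Set (Fin g)))).Connected)
    (hc : ∀ i, c i ≤ len i) (hatt : ∀ i, 0 < c i → att i ∈ S) :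
    ((G').induce ↑(buildB (len := len) S c)).Connected := by
  suffices H : ∀ n (c : Fin k → ℕ), (∀ i, c i ≤ len i) → (∀ i, 0 < c i → att i ∈ S) →
      (∑ i, c i) = n → ((G').induce ↑(buildB (len := len) S c)).Connected from
    H _ c hc hatt rfl
  intro n
  induction n using Nat.strong_induction_on with
  | _ n ih =>
    intro c hc hatt hn
    rcases Nat.eq_zero_or_pos n with rfl | hpos
    · have hz : ∀ i, c i = 0 := by
        intro i
        have := Finset.sum_eq_zero_iff.mp hn i (Finset.mem_univ i)
        exact this
      have : (↑(buildB (len := len) S c) : Set V') = Sum.inl '' (S : Set (Fin g)) := by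
        ext v
        simp only [Finset.mem_coe, Set.mem_image, Finset.mem_coe]
        obtain (x | ⟨j, p⟩) := v
        · rw [mem_buildB_inl]
          constructor
          · intro h; exact ⟨x, h, rfl⟩
          · rintro ⟨y, hy, he⟩; cases he; exact hy
        · rw [mem_buildB_inr]
          constructor
          · intro h; rw [hz j] at h; omega
          · rintro ⟨y, hy, he⟩; cases he
      rw [this]; exact hconn
    · -- pick i with c i > 0
      have hex : ∃ i, 0 < c i := by
        by_contra hno
        push_neg at hno
        have : (∑ i, c i) = 0 := Finset.sum_eq_zero (fun i _ => by have := hno i; omega)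
        omega
      obtain ⟨i, hi⟩ := hex
      set c' := Function.update c i (c i - 1) with hc'
      have hc'le : ∀ j, c' j ≤ len j := by
        intro j
        rcases eq_or_ne j i with rfl | hne
        · simp [hc', Function.update_self]; have := hc j; omega
        · simp [hc', Function.update_of_ne hne]; exact hc j
      have hatt' : ∀ j, 0 < c' j → att j ∈ S := by
        intro j hj
        rcases eq_or_ne j i with rfl | hne
        · exact hatt j hi
        · rw [hc', Function.update_of_ne hne] at hj; exact hatt j hj
      have hsum : (∑ j, c' j) = n - 1 := by
        have hsplit := Finset.add_sum_erase Finset.univ c (Finset.mem_univ i)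
        rw [hc', Finset.sum_update_of_mem (Finset.mem_univ i),
          Finset.sdiff_singleton_eq_erase]
        omega
      have htop : c i - 1 < len i := by have := hc i; omega
      have hstep : (↑(buildB (len := len) S c) : Set V') =
          insert (Sum.inr ⟨i, ⟨c i - 1, htop⟩⟩) ↑(buildB (len := len) S c') := by
        ext v
        simp only [Finset.mem_coe, Set.mem_insert_iff]
        obtain (x | ⟨j, p⟩) := v
        · rw [mem_buildB_inl, mem_buildB_inl]
          simp
        · rw [mem_buildB_inr, mem_buildB_inr, inr_eq_inr]
          rcases eq_or_ne j i with heq | hne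
          · subst heq
            rw [hc', Function.update_self]
            constructor
            · intro h
              rcases Nat.lt_or_ge (p : ℕ) (c j - 1) with h2 | h2
              · exact Or.inr h2
              · exact Or.inl ⟨rfl, by simp only [Fin.val_mk]; omega⟩
            · rintro (⟨-, h⟩ | h)
              · simp only [Fin.val_mk] at h; omega
              · omega
          · rw [hc', Function.update_of_ne hne]
            constructor
            · intro h; exact Or.inr h
            · rintro (⟨h, -⟩ | h)
              · exact absurd h hne
              · exact h
      show ((G').induce ↑(buildB (len := len) S c)).Connected
      rw [hstep]
      have hrec : ((G').induce ↑(buildB (len := len) S c')).Connected :=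
        ih (n - 1) (by omega) c' hc'le hatt' hsum
      rcases Nat.eq_zero_or_pos (c i - 1) with hz | hpos2
      · refine induce_insert_connected hrec (w := Sum.inl (att i)) ?_ ?_
        · rw [Finset.mem_coe, mem_buildB_inl]; exact hatt i hi
        · exact (adj_inl_inr.mpr ⟨rfl, by simp [hz]⟩).symm
      · have htop2 : c i - 2 < len i := by omega
        refine induce_insert_connected hrec (w := Sum.inr ⟨i, ⟨c i - 2, htop2⟩⟩) ?_ ?_
        · rw [Finset.mem_coe, mem_buildB_inr]
          simp only [Fin.val_mk, hc', Function.update_self]; omega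
        · rw [adj_inr_inr]
          exact ⟨rfl, by simp only [Fin.val_mk]; omega⟩
end core2


section forwardsec
variable {g k : ℕ} {att : Fin k → Fin g} {len : Fin k → ℕ}
local notation "V'" => (Fin g ⊕ Σ i : Fin k, Fin (len i))
local notation "G'" => cyclePendants g k att len

lemma downward_mem_iff_lt_card {F : Finset ℕ} (hdc : ∀ q ∈ F, ∀ r < q, r ∈ F) (q : ℕ) :
    q ∈ F ↔ q < F.card := by
  constructor
  · intro hq
    have hsub : Finset.range (q + 1) ⊆ F := by
      intro r hr
      rw [Finset.mem_range] at hr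
      rcases Nat.lt_or_ge r q with h | h
      · exact hdc q hq r h
      · have : r = q := by omega
        rwa [this]
    have := Finset.card_le_card hsub
    simpa using this
  · intro h
    by_contra hq
    have hsub : F ⊆ Finset.range q := by
      intro x hx
      rw [Finset.mem_range]
      by_contra hxq
      push_neg at hxq
      rcases Nat.lt_or_ge q x with h2 | h2
      · exact hq (hdc x hx q h2)
      · have : x = q := by omega
        rw [this] at hx; exact hq hx
    have := Finset.card_le_card hsub
    simp at this; omega

/-- Cut lemma: if `s` is connected, contains a path-`i` vertex at level `≥ t`, and
contains something outside `{path-i vertices at level ≥ t}`, then it contains the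
vertex just below the cut. -/
lemma cut_lemma {s : Finset V'} (hconn : ((G').induce ↑s).Connected) (i : Fin k) (t : ℕ)
    {u0 : Fin (len i)} (hu0 : Sum.inr ⟨i, u0⟩ ∈ s) (hu0t : t ≤ (u0 : ℕ))
    {b : V'} (hb : b ∈ s) (hbA : ¬ ∃ u : Fin (len i), b = Sum.inr ⟨i, u⟩ ∧ t ≤ (u : ℕ)) :
    (∃ u : Fin (len i), Sum.inr ⟨i, u⟩ ∈ s ∧ (u : ℕ) + 1 = t) ∨
      (t = 0 ∧ Sum.inl (att i) ∈ s) := by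
  obtain ⟨x, hxs, hxA, y, hys, hyA, hadj⟩ := induce_cross hconn (A := {v : V' |
      ∃ u : Fin (len i), v = Sum.inr ⟨i, u⟩ ∧ t ≤ (u : ℕ)})
    (Finset.mem_coe.mpr hu0) ⟨u0, rfl, hu0t⟩ (Finset.mem_coe.mpr hb) hbA
  obtain ⟨u, rfl, hut⟩ := hxA
  obtain (z | ⟨j, v⟩) := y
  · obtain ⟨hz, hu⟩ := adj_inl_inr.mp hadj.symm
    subst hz
    have ht : t = 0 := by omega
    exact Or.inr ⟨ht, Finset.mem_coe.mp hys⟩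
  · obtain ⟨hij, hv⟩ := adj_inr_inr.mp hadj
    subst hij
    rcases hv with hv | hv
    · exact absurd ⟨v, rfl, by omega⟩ hyA
    · rcases Nat.lt_or_ge (v : ℕ) t with hvt | hvt
      · exact Or.inl ⟨v, Finset.mem_coe.mp hys, by omega⟩
      · exact absurd ⟨v, rfl, hvt⟩ hyA

lemma same_path {s : Finset V'} (hconn : ((G').induce ↑s).Connected)
    (hSC : ∀ x : Fin g, (Sum.inl x : V') ∉ s) {i : Fin k} {p : Fin (len i)}
    (hp : Sum.inr ⟨i, p⟩ ∈ s) {v : V'} (hv : v ∈ s) :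
    ∃ q : Fin (len i), v = Sum.inr ⟨i, q⟩ := by
  by_contra hcon
  obtain ⟨x, hxs, hxA, y, hys, hyA, hadj⟩ := induce_cross hconn
    (A := {v : V' | ∃ u : Fin (len i), v = Sum.inr ⟨i, u⟩})
    (Finset.mem_coe.mpr hp) ⟨p, rfl⟩ (Finset.mem_coe.mpr hv) hcon
  obtain ⟨u, rfl⟩ := hxA
  obtain (z | ⟨j, w⟩) := y
  · exact hSC z (Finset.mem_coe.mp hys)
  · obtain ⟨hij, -⟩ := adj_inr_inr.mp hadj
    subst hij
    exact hyA ⟨w, rfl⟩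

lemma charA {s : Finset V'} (hne : s.Nonempty) (hconn : ((G').induce ↑s).Connected)
    (hSC : ∀ x : Fin g, (Sum.inl x : V') ∉ s) :
    ∃ (i : Fin k) (a b : ℕ), a ≤ b ∧ b < len i ∧ s = buildA (g := g) (len := len) i a b := by
  obtain ⟨v0, hv0⟩ := hne
  obtain (x | ⟨i, p0⟩) := v0
  · exact absurd hv0 (hSC x)
  classical
  set F : Finset ℕ :=
    (Finset.univ.filter (fun q : Fin (len i) => Sum.inr ⟨i, q⟩ ∈ s)).image Fin.val with hF
  have mem_F : ∀ t : ℕ, t ∈ F ↔ ∃ q : Fin (len i), Sum.inr ⟨i, q⟩ ∈ s ∧ (q : ℕ) = t := by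
    intro t
    simp [hF, Finset.mem_image, Finset.mem_filter]
  have hp0F : (p0 : ℕ) ∈ F := (mem_F _).mpr ⟨p0, hv0, rfl⟩
  have hFne : F.Nonempty := ⟨_, hp0F⟩
  set a := F.min' hFne with ha
  set b := F.max' hFne with hb2
  have fill : ∀ d r, r + d ∈ F → (∃ q ∈ F, q ≤ r) → r ∈ F := by
    intro d
    induction d with
    | zero => intro r hr _; simpa using hr
    | succ d ih =>
      intro r hr hlow
      refine ih r ?_ hlow
      obtain ⟨u1, hu1, hu1v⟩ := (mem_F _).mp (by rwa [← Nat.add_assoc] at hr)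
      obtain ⟨ql, hql, hqlr⟩ := hlow
      obtain ⟨q2, hq2, hq2v⟩ := (mem_F _).mp hql
      have hcut := cut_lemma hconn i (r + d + 1) hu1 (by omega) (b := Sum.inr ⟨i, q2⟩)
        hq2 ?hb
      case hb =>
        rintro ⟨u, he, hu⟩
        obtain ⟨-, hv⟩ := inr_eq_inr.mp he
        omega
      rcases hcut with ⟨u, hu, huv⟩ | ⟨h0, -⟩
      · rw [← Nat.add_assoc] at *
        exact (mem_F _).mpr ⟨u, hu, by omega⟩
      · omega
  have haF : a ∈ F := F.min'_mem hFne
  have hbF : b ∈ F := F.max'_mem hFne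
  obtain ⟨qb, hqb, hqbv⟩ := (mem_F _).mp hbF
  refine ⟨i, a, b, F.min'_le _ hbF, by omega, ?_⟩
  ext v
  obtain (x | ⟨j, q⟩) := v
  · simp [mem_buildA_inl, hSC x]
  · rw [mem_buildA_inr]
    constructor
    · intro hv
      obtain ⟨q', he⟩ := same_path hconn hSC hv0 hv
      obtain ⟨rfl, hval⟩ := inr_eq_inr.mp he
      have hqF : (q : ℕ) ∈ F := (mem_F _).mpr ⟨q, hv, rfl⟩
      exact ⟨rfl, F.min'_le _ hqF, F.le_max' _ hqF⟩
    · rintro ⟨heq, h1, h2⟩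
      subst heq
      have : (q : ℕ) ∈ F := by
        refine fill (b - (q : ℕ)) (q : ℕ) (by rw [show (q:ℕ) + (b - (q:ℕ)) = b by omega]; exact hbF) ⟨a, haF, h1⟩
      obtain ⟨q', hq', hq'v⟩ := (mem_F _).mp this
      rwa [show (Sum.inr ⟨_, q'⟩ : V') = Sum.inr ⟨_, q⟩ from
        inr_eq_inr.mpr ⟨rfl, hq'v⟩] at hq'

lemma charB {s : Finset V'} (hconn : ((G').induce ↑s).Connected)
    {x0 : Fin g} (hx0 : (Sum.inl x0 : V') ∈ s) :
    ∃ (S : Finset (Fin g)) (c : Fin k → ℕ), S.Nonempty ∧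
      ((G').induce (Sum.inl '' (↑S : Set (Fin g)))).Connected ∧
      (∀ i, c i ≤ len i) ∧ (∀ i, 0 < c i → att i ∈ S) ∧
      s = buildB (len := len) S c := by
  classical
  set SC : Finset (Fin g) := Finset.univ.filter (fun x : Fin g => (Sum.inl x : V') ∈ s)
    with hSC
  have mem_SC : ∀ x : Fin g, x ∈ SC ↔ (Sum.inl x : V') ∈ s := by
    intro x; simp [hSC]
  have pre : ∀ (i : Fin k) (q : Fin (len i)), Sum.inr ⟨i, q⟩ ∈ s →
      (∃ u : Fin (len i), Sum.inr ⟨i, u⟩ ∈ s ∧ (u : ℕ) + 1 = (q : ℕ)) ∨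
      ((q : ℕ) = 0 ∧ Sum.inl (att i) ∈ s) := by
    intro i q hq
    refine cut_lemma hconn i (q : ℕ) hq le_rfl (b := Sum.inl x0) hx0 ?_
    rintro ⟨u, he, -⟩
    exact absurd he (by simp)
  set F : ∀ _ : Fin k, Finset ℕ := fun i =>
    (Finset.univ.filter (fun q : Fin (len i) => Sum.inr ⟨i, q⟩ ∈ s)).image Fin.val with hF
  have mem_F : ∀ (i : Fin k) (t : ℕ),
      t ∈ F i ↔ ∃ q : Fin (len i), Sum.inr ⟨i, q⟩ ∈ s ∧ (q : ℕ) = t := by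
    intro i t
    simp [hF, Finset.mem_image, Finset.mem_filter]
  have hstep : ∀ (i : Fin k) (q : ℕ), q ∈ F i → 0 < q → q - 1 ∈ F i := by
    intro i q hq hq0
    obtain ⟨qf, hqf, hqfv⟩ := (mem_F i q).mp hq
    rcases pre i qf hqf with ⟨u, hu, huv⟩ | ⟨h0, -⟩
    · exact (mem_F i _).mpr ⟨u, hu, by omega⟩
    · omega
  have hdown : ∀ (i : Fin k) (d q : ℕ), q ∈ F i → q - d ∈ F i := by
    intro i d
    induction d with
    | zero => intro q hq; simpa using hq
    | succ d ih =>
      intro q hq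
      have h1 := ih q hq
      rcases Nat.eq_zero_or_pos (q - d) with h2 | h2
      · rw [show q - (d + 1) = q - d by omega]; exact h1
      · rw [show q - (d + 1) = (q - d) - 1 by omega]
        exact hstep i _ h1 h2
  have hdc : ∀ i : Fin k, ∀ q ∈ F i, ∀ r < q, r ∈ F i := by
    intro i q hq r hr
    have := hdown i (q - r) q hq
    rwa [show q - (q - r) = r by omega] at this
  set c : Fin k → ℕ := fun i => (F i).card with hc
  have mem_iff : ∀ (i : Fin k) (q : ℕ), q ∈ F i ↔ q < c i :=
    fun i => downward_mem_iff_lt_card (hdc i)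
  have hcle : ∀ i, c i ≤ len i := by
    intro i
    have hsub : F i ⊆ Finset.range (len i) := by
      intro t ht
      obtain ⟨q, -, hqv⟩ := (mem_F i t).mp ht
      rw [Finset.mem_range]; omega
    have := Finset.card_le_card hsub
    simpa using this
  have hattc : ∀ i, 0 < c i → att i ∈ SC := by
    intro i hi
    have h0 : (0 : ℕ) ∈ F i := (mem_iff i 0).mpr hi
    obtain ⟨qf, hqf, hqfv⟩ := (mem_F i 0).mp h0
    rcases pre i qf hqf with ⟨u, -, huv⟩ | ⟨-, hatt⟩
    · omega
    · exact (mem_SC _).mpr hatt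
  have hSCne : SC.Nonempty := ⟨x0, (mem_SC x0).mpr hx0⟩
  have hx0' : (Sum.inl x0 : V') ∈ Sum.inl '' (↑SC : Set (Fin g)) :=
    ⟨x0, by simpa using (mem_SC x0).mpr hx0, rfl⟩
  have hconnSC : ((G').induce (Sum.inl '' (↑SC : Set (Fin g)))).Connected := by
    rw [connected_iff_exists_forall_reachable]
    refine ⟨⟨_, hx0'⟩, ?_⟩
    rintro ⟨w, hw⟩
    obtain ⟨z, hz, rfl⟩ := hw
    by_contra hnr
    set A : Set V' := {v : V' |
        (∃ (hy : v ∈ Sum.inl '' (↑SC : Set (Fin g))),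
          ((G').induce (Sum.inl '' (↑SC : Set (Fin g)))).Reachable ⟨_, hx0'⟩ ⟨v, hy⟩) ∨
        (∃ (j : Fin k) (u : Fin (len j)), v = Sum.inr ⟨j, u⟩ ∧
          ∃ (hy : (Sum.inl (att j) : V') ∈ Sum.inl '' (↑SC : Set (Fin g))),
          ((G').induce (Sum.inl '' (↑SC : Set (Fin g)))).Reachable ⟨_, hx0'⟩ ⟨_, hy⟩)}
      with hAdef
    have hbA : (Sum.inl z : V') ∉ A := by
      rw [hAdef]
      rintro (⟨hy, hr⟩ | ⟨j, u, he, -⟩)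
      · exact hnr (by exact hr)
      · exact absurd he (by simp)
    obtain ⟨x, hxs, hxA, y, hys, hyA, hadj⟩ := induce_cross hconn (A := A)
      hx0 (Or.inl ⟨hx0', Reachable.refl _⟩) ((mem_SC z).mp hz) hbA
    rw [hAdef] at hxA hyA
    obtain (xv | ⟨xi, xu⟩) := x
    · obtain (⟨hxm, hxr⟩ | ⟨j, u, he, -⟩) := hxA
      swap
      · exact absurd he (by simp)
      obtain (zv | ⟨yi, yv⟩) := y
      · have hzv : (Sum.inl zv : V') ∈ Sum.inl '' (↑SC : Set (Fin g)) :=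
          ⟨zv, by simpa using (mem_SC zv).mpr hys, rfl⟩
        refine hyA (Or.inl ⟨hzv, hxr.trans (Adj.reachable ?_)⟩)
        exact hadj
      · obtain ⟨hxv, hyv0⟩ := adj_inl_inr.mp hadj
        subst hxv
        exact hyA (Or.inr ⟨yi, yv, rfl, hxm, hxr⟩)
    · obtain (⟨hxm, -⟩ | ⟨j, u, he, hy2, hr2⟩) := hxA
      · obtain ⟨z2, -, he⟩ := hxm
        exact absurd he (by simp)
      · obtain ⟨hij, hval⟩ := inr_eq_inr.mp he
        subst hij
        obtain (zv | ⟨yi, yv⟩) := y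
        · obtain ⟨hz2, -⟩ := adj_inl_inr.mp hadj.symm
          subst hz2
          exact hyA (Or.inl ⟨hy2, hr2⟩)
        · obtain ⟨hij2, -⟩ := adj_inr_inr.mp hadj
          subst hij2
          exact hyA (Or.inr ⟨_, yv, rfl, hy2, hr2⟩)
  refine ⟨SC, c, hSCne, hconnSC, hcle, fun i hi => hattc i hi, ?_⟩
  ext v
  obtain (x | ⟨j, q⟩) := v
  · rw [mem_buildB_inl]
    exact (mem_SC x).symm
  · rw [mem_buildB_inr]
    constructor
    · intro hv
      exact (mem_iff j (q : ℕ)).mp ((mem_F j _).mpr ⟨q, hv, rfl⟩)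
    · intro hlt
      obtain ⟨q', hq', hq'v⟩ := (mem_F j _).mp ((mem_iff j (q : ℕ)).mpr hlt)
      rwa [show (Sum.inr ⟨_, q'⟩ : V') = Sum.inr ⟨_, q⟩ from
        inr_eq_inr.mpr ⟨rfl, hq'v⟩] at hq'

theorem char {s : Finset V'} :
    (s.Nonempty ∧ ((G').induce (↑s : Set V')).Connected) ↔
      ((∃ (i : Fin k) (a b : ℕ), a ≤ b ∧ b < len i ∧ s = buildA (g := g) (len := len) i a b) ∨
       (∃ (S : Finset (Fin g)) (c : Fin k → ℕ), S.Nonempty ∧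
          ((G').induce (Sum.inl '' (↑S : Set (Fin g)))).Connected ∧
          (∀ i, c i ≤ len i) ∧ (∀ i, 0 < c i → att i ∈ S) ∧
          s = buildB (len := len) S c)) := by
  constructor
  · rintro ⟨hne, hconn⟩
    by_cases hSC : ∃ x : Fin g, (Sum.inl x : V') ∈ s
    · obtain ⟨x0, hx0⟩ := hSC
      exact Or.inr (charB hconn hx0)
    · push_neg at hSC
      exact Or.inl (charA hne hconn hSC)
  · rintro (⟨i, a, b, hab, hb, rfl⟩ | ⟨S, c, hSne, hSconn, hcle, hatt, rfl⟩)
    · refine ⟨⟨Sum.inr ⟨i, ⟨a, by omega⟩⟩, ?_⟩, connA i a b hab hb⟩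
      rw [mem_buildA_inr]
      exact ⟨rfl, by simp, by simp; omega⟩
    · obtain ⟨x, hx⟩ := hSne
      refine ⟨⟨Sum.inl x, ?_⟩, connB S c ⟨x, hx⟩ hSconn hcle hatt⟩
      rw [mem_buildB_inl]; exact hx

end forwardsec


section countsec
variable {g k : ℕ} {att : Fin k → Fin g} {len : Fin k → ℕ}
local notation "V'" => (Fin g ⊕ Σ i : Fin k, Fin (len i))
local notation "G'" => cyclePendants g k att len

theorem count_formula (CC : Finset (Fin g) → Prop) [DecidablePred CC]
    (hCC : ∀ S : Finset (Fin g), S.Nonempty →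
      (CC S ↔ ((G').induce (Sum.inl '' (↑S : Set (Fin g)))).Connected)) :
    numCIS (G') =
      (∑ i : Fin k, ∑ a ∈ Finset.range (len i), (len i - a)) +
      ∑ S ∈ Finset.univ.filter (fun S : Finset (Fin g) => S.Nonempty ∧ CC S),
        ∏ i : Fin k, (if att i ∈ S then len i + 1 else 1) := by
  classical
  have h1 : numCIS (G') = (Finset.univ.filter
      (fun s : Finset V' => s.Nonempty ∧ ((G').induce (↑s : Set V')).Connected)).card := by
    rw [numCIS, Nat.card_eq_fintype_card, Fintype.card_subtype]
  rw [h1]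
  set QA : Finset V' → Prop := fun s =>
    ∃ (i : Fin k) (a b : ℕ), a ≤ b ∧ b < len i ∧ s = buildA (g := g) (len := len) i a b
    with hQA
  set QB : Finset V' → Prop := fun s =>
    ∃ (S : Finset (Fin g)) (c : Fin k → ℕ), S.Nonempty ∧
      ((G').induce (Sum.inl '' (↑S : Set (Fin g)))).Connected ∧
      (∀ i, c i ≤ len i) ∧ (∀ i, 0 < c i → att i ∈ S) ∧ s = buildB (len := len) S c
    with hQB
  have hsplit : Finset.univ.filter
      (fun s : Finset V' => s.Nonempty ∧ ((G').induce (↑s : Set V')).Connected) =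
      Finset.univ.filter QA ∪ Finset.univ.filter QB := by
    rw [← Finset.filter_or]
    exact Finset.filter_congr (fun s _ => char)
  rw [hsplit, Finset.card_union_of_disjoint]
  · congr 1
    · -- card of QA part
      rw [show (∑ i : Fin k, ∑ a ∈ Finset.range (len i), (len i - a)) =
          (Finset.univ.sigma (fun i : Fin k =>
            (Finset.range (len i)).sigma (fun a => Finset.Ico a (len i)))).card by
        rw [Finset.card_sigma]
        refine Finset.sum_congr rfl (fun i _ => ?_)
        rw [Finset.card_sigma]
        exact Finset.sum_congr rfl (fun a _ => by rw [Nat.card_Ico])]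
      symm
      apply Finset.card_bij (fun x _ => buildA (g := g) (len := len) x.1 x.2.1 x.2.2)
      · rintro ⟨i, a, b⟩ hx
        simp only [Finset.mem_sigma, Finset.mem_univ, Finset.mem_range, Finset.mem_Ico,
          true_and] at hx
        rw [Finset.mem_filter]
        exact ⟨Finset.mem_univ _, i, a, b, hx.2.1, hx.2.2, rfl⟩
      · rintro ⟨i, a, b⟩ hx ⟨i', a', b'⟩ hx' heq
        simp only [Finset.mem_sigma, Finset.mem_univ, Finset.mem_range, Finset.mem_Ico,
          true_and] at hx hx'
        obtain ⟨ha, ha2, hb⟩ := hx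
        obtain ⟨ha', ha2', hb'⟩ := hx'
        have m1 : (Sum.inr ⟨i, ⟨a, by omega⟩⟩ : V') ∈ buildA (g := g) (len := len) i a b := by
          rw [mem_buildA_inr]; exact ⟨rfl, by simp, by simp; omega⟩
        have m2 : (Sum.inr ⟨i, ⟨b, by omega⟩⟩ : V') ∈ buildA (g := g) (len := len) i a b := by
          rw [mem_buildA_inr]; exact ⟨rfl, by simp; omega, by simp⟩
        have m1' : (Sum.inr ⟨i', ⟨a', by omega⟩⟩ : V') ∈ buildA (g := g) (len := len) i' a' b' := by
          rw [mem_buildA_inr]; exact ⟨rfl, by simp, by simp; omega⟩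
        have m2' : (Sum.inr ⟨i', ⟨b', by omega⟩⟩ : V') ∈ buildA (g := g) (len := len) i' a' b' := by
          rw [mem_buildA_inr]; exact ⟨rfl, by simp; omega, by simp⟩
        rw [heq] at m1 m2
        rw [← heq] at m1' m2'
        rw [mem_buildA_inr] at m1 m2 m1' m2'
        obtain ⟨hii, hia, -⟩ := m1
        obtain ⟨-, -, hib⟩ := m2
        obtain ⟨-, hia', -⟩ := m1'
        obtain ⟨-, -, hib'⟩ := m2'
        subst hii
        simp only [Fin.val_mk] at hia hib hia' hib'
        have : a = a' := by omega
        have : b = b' := by omega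
        subst_vars
        rfl
      · intro s hs
        rw [Finset.mem_filter] at hs
        obtain ⟨-, i, a, b, hab, hb, rfl⟩ := hs
        refine ⟨⟨i, a, b⟩, ?_, rfl⟩
        simp only [Finset.mem_sigma, Finset.mem_univ, Finset.mem_range, Finset.mem_Ico,
          true_and]
        exact ⟨by omega, by omega, by omega⟩
    · -- card of QB part
      rw [show (∑ S ∈ Finset.univ.filter (fun S : Finset (Fin g) => S.Nonempty ∧ CC S),
            ∏ i : Fin k, (if att i ∈ S then len i + 1 else 1)) =
          ((Finset.univ.filter (fun S : Finset (Fin g) => S.Nonempty ∧ CC S)).sigma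
            (fun S => Fintype.piFinset (fun i : Fin k =>
              Finset.range (if att i ∈ S then len i + 1 else 1)))).card by
        rw [Finset.card_sigma]
        refine Finset.sum_congr rfl (fun S _ => ?_)
        rw [Fintype.card_piFinset]
        exact Finset.prod_congr rfl (fun i _ => by rw [Finset.card_range])]
      symm
      apply Finset.card_bij (fun x _ => buildB (len := len) x.1 x.2)
      · rintro ⟨S, c⟩ hx
        simp only [Finset.mem_sigma, Finset.mem_filter, Finset.mem_univ, true_and,
          Fintype.mem_piFinset, Finset.mem_range] at hx
        obtain ⟨⟨hSne, hCCS⟩, hc⟩ := hx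
        rw [Finset.mem_filter]
        refine ⟨Finset.mem_univ _, S, c, hSne, (hCC S hSne).mp hCCS, ?_, ?_, rfl⟩
        · intro i
          have := hc i
          by_cases hi : att i ∈ S <;> simp [hi] at this <;> omega
        · intro i hi
          have := hc i
          by_cases h2 : att i ∈ S
          · exact h2
          · simp [h2] at this; omega
      · rintro ⟨S, c⟩ hx ⟨S', c'⟩ hx' heq
        simp only [Finset.mem_sigma, Finset.mem_filter, Finset.mem_univ, true_and,
          Fintype.mem_piFinset, Finset.mem_range] at hx hx'
        obtain ⟨⟨hSne, -⟩, hc⟩ := hx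
        obtain ⟨⟨hSne', -⟩, hc'⟩ := hx'
        have hS : S = S' := by
          ext x
          have h1 := mem_buildB_inl (len := len) (S := S) (c := c) (x := x)
          have h2 := mem_buildB_inl (len := len) (S := S') (c := c') (x := x)
          rw [← h1, ← h2, heq]
        subst hS
        have hcc : c = c' := by
          funext i
          have hci : c i ≤ len i := by
            have := hc i; by_cases hi : att i ∈ S <;> simp [hi] at this <;> omega
          have hci' : c' i ≤ len i := by
            have := hc' i; by_cases hi : att i ∈ S <;> simp [hi] at this <;> omega
          by_contra hne
          rcases Nat.lt_or_ge (c i) (c' i) with hlt | hge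
          · have hm : (Sum.inr ⟨i, ⟨c i, by omega⟩⟩ : V') ∈ buildB (len := len) S c' := by
              rw [mem_buildB_inr]; simp; omega
            rw [← heq, mem_buildB_inr] at hm
            simp only [Fin.val_mk] at hm; omega
          · have hlt : c' i < c i := by omega
            have hm : (Sum.inr ⟨i, ⟨c' i, by omega⟩⟩ : V') ∈ buildB (len := len) S c := by
              rw [mem_buildB_inr]; simp; omega
            rw [heq, mem_buildB_inr] at hm
            simp only [Fin.val_mk] at hm; omega
        rw [hcc]
      · intro s hs
        rw [Finset.mem_filter] at hs
        obtain ⟨-, S, c, hSne, hSconn, hcle, hatt, rfl⟩ := hs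
        refine ⟨⟨S, c⟩, ?_, rfl⟩
        simp only [Finset.mem_sigma, Finset.mem_filter, Finset.mem_univ, true_and,
          Fintype.mem_piFinset, Finset.mem_range]
        refine ⟨⟨hSne, (hCC S hSne).mpr hSconn⟩, ?_⟩
        intro i
        by_cases hi : att i ∈ S
        · simp [hi]; have := hcle i; omega
        · simp [hi]
          by_contra h
          exact hi (hatt i (by omega))
  · -- disjointness
    rw [Finset.disjoint_filter]
    rintro s - ⟨i, a, b, hab, hb, rfl⟩ ⟨S, c, hSne, -, -, -, hBeq⟩
    obtain ⟨x, hx⟩ := hSne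
    have : (Sum.inl x : V') ∈ buildB (len := len) S c := mem_buildB_inl.mpr hx
    rw [← hBeq] at this
    exact mem_buildA_inl this

end countsec


section smallcases
variable {g k : ℕ} {att : Fin k → Fin g} {len : Fin k → ℕ}
local notation "V'" => (Fin g ⊕ Σ i : Fin k, Fin (len i))
local notation "G'" => cyclePendants g k att len

lemma conn_single (x : Fin g) :
    ((G').induce (Sum.inl '' (↑({x} : Finset (Fin g)) : Set (Fin g)))).Connected := by
  have himg : (Sum.inl '' (↑({x} : Finset (Fin g)) : Set (Fin g)) : Set V') =
      {Sum.inl x} := by simp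
  rw [himg]
  exact induce_singleton_connected _

lemma conn_insert {x y : Fin g} {S : Finset (Fin g)}
    (hS : ((G').induce (Sum.inl '' (↑S : Set (Fin g)))).Connected) (hy : y ∈ S)
    (hadj : (G').Adj (Sum.inl x) (Sum.inl y)) :
    ((G').induce (Sum.inl '' (↑(insert x S) : Set (Fin g)))).Connected := by
  have himg : (Sum.inl '' (↑(insert x S) : Set (Fin g)) : Set V') =
      insert (Sum.inl x) (Sum.inl '' (↑S : Set (Fin g))) := by
    simp [Set.image_insert_eq]
  rw [himg]
  exact induce_insert_connected hS ⟨y, by simpa using hy, rfl⟩ hadj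

lemma not_conn_02 {S : Finset (Fin g)} {x y : Fin g} (hx : x ∈ S) (hy : y ∈ S)
    (hsep : ∀ z ∈ S, z = x ∨ z = y)
    (hnadj : ¬ (G').Adj (Sum.inl x) (Sum.inl y)) (hne : x ≠ y) :
    ¬ ((G').induce (Sum.inl '' (↑S : Set (Fin g)))).Connected := by
  intro h
  obtain ⟨a, has, haA, b, hbs, hbA, hadj⟩ := induce_cross h (A := {(Sum.inl x : V')})
    (a := Sum.inl x) (b := Sum.inl y) ⟨x, by simpa using hx, rfl⟩ rfl
    ⟨y, by simpa using hy, rfl⟩ (by simp [hne.symm])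
  rw [Set.mem_singleton_iff] at haA
  subst haA
  obtain ⟨z, hz, rfl⟩ := hbs
  rcases hsep z (by simpa using hz) with rfl | rfl
  · exact hbA rfl
  · exact hnadj hadj

end smallcases


section inst3
variable {k : ℕ} {att : Fin k → Fin 3} {len : Fin k → ℕ}

lemma connFin3 (S : Finset (Fin 3)) (hS : S.Nonempty) :
    ((cyclePendants 3 k att len).induce (Sum.inl '' (↑S : Set (Fin 3)))).Connected := by
  have henum : ∀ T : Finset (Fin 3), T.Nonempty → (T = {0} ∨ T = {1} ∨ T = {2} ∨
      T = {0, 1} ∨ T = {0, 2} ∨ T = {1, 2} ∨ T = {0, 1, 2}) := by decide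
  rcases henum S hS with rfl | rfl | rfl | rfl | rfl | rfl | rfl
  · exact conn_single 0
  · exact conn_single 1
  · exact conn_single 2
  · exact conn_insert (y := 1) (conn_single 1) (by decide) (adj_inl_inl.mpr (by decide))
  · exact conn_insert (y := 2) (conn_single 2) (by decide) (adj_inl_inl.mpr (by decide))
  · exact conn_insert (y := 2) (conn_single 2) (by decide) (adj_inl_inl.mpr (by decide))
  · exact conn_insert (y := 1) (conn_insert (y := 2) (conn_single 2) (by decide)
      (adj_inl_inl.mpr (by decide))) (by decide) (adj_inl_inl.mpr (by decide))

lemma hCC3 : ∀ S : Finset (Fin 3), S.Nonempty →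
    ((fun S : Finset (Fin 3) => S.Nonempty) S ↔
      ((cyclePendants 3 k att len).induce (Sum.inl '' (↑S : Set (Fin 3)))).Connected) :=
  fun S hS => ⟨fun _ => connFin3 S hS, fun _ => hS⟩

end inst3

section inst4
variable {k : ℕ} {att : Fin k → Fin 4} {len : Fin k → ℕ}

lemma connFin4 (S : Finset (Fin 4)) (hS : S.Nonempty) (h1 : S ≠ {0, 2}) (h2 : S ≠ {1, 3}) :
    ((cyclePendants 4 k att len).induce (Sum.inl '' (↑S : Set (Fin 4)))).Connected := by
  have henum : ∀ T : Finset (Fin 4), T.Nonempty → T ≠ {0, 2} → T ≠ {1, 3} →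
      (T = {0} ∨ T = {1} ∨ T = {2} ∨ T = {3} ∨
       T = {0, 1} ∨ T = {0, 3} ∨ T = {1, 2} ∨ T = {2, 3} ∨
       T = {0, 1, 2} ∨ T = {1, 0, 3} ∨ T = {0, 2, 3} ∨ T = {1, 2, 3} ∨
       T = {0, 1, 2, 3}) := by decide
  rcases henum S hS h1 h2 with rfl|rfl|rfl|rfl|rfl|rfl|rfl|rfl|rfl|rfl|rfl|rfl|rfl
  · exact conn_single 0
  · exact conn_single 1
  · exact conn_single 2
  · exact conn_single 3
  · exact conn_insert (y := 1) (conn_single 1) (by decide) (adj_inl_inl.mpr (by decide))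
  · exact conn_insert (y := 3) (conn_single 3) (by decide) (adj_inl_inl.mpr (by decide))
  · exact conn_insert (y := 2) (conn_single 2) (by decide) (adj_inl_inl.mpr (by decide))
  · exact conn_insert (y := 3) (conn_single 3) (by decide) (adj_inl_inl.mpr (by decide))
  · exact conn_insert (y := 1) (conn_insert (y := 2) (conn_single 2) (by decide)
      (adj_inl_inl.mpr (by decide))) (by decide) (adj_inl_inl.mpr (by decide))
  · exact conn_insert (y := 0) (conn_insert (y := 3) (conn_single 3) (by decide)
      (adj_inl_inl.mpr (by decide))) (by decide) (adj_inl_inl.mpr (by decide))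
  · exact conn_insert (y := 3) (conn_insert (y := 3) (conn_single 3) (by decide)
      (adj_inl_inl.mpr (by decide))) (by decide) (adj_inl_inl.mpr (by decide))
  · exact conn_insert (y := 2) (conn_insert (y := 3) (conn_single 3) (by decide)
      (adj_inl_inl.mpr (by decide))) (by decide) (adj_inl_inl.mpr (by decide))
  · exact conn_insert (y := 1) (conn_insert (y := 2) (conn_insert (y := 3) (conn_single 3)
      (by decide) (adj_inl_inl.mpr (by decide))) (by decide) (adj_inl_inl.mpr (by decide)))
      (by decide) (adj_inl_inl.mpr (by decide))

lemma hCC4 : ∀ S : Finset (Fin 4), S.Nonempty →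
    ((fun S : Finset (Fin 4) => S ≠ {0, 2} ∧ S ≠ {1, 3}) S ↔
      ((cyclePendants 4 k att len).induce (Sum.inl '' (↑S : Set (Fin 4)))).Connected) := by
  intro S hS
  constructor
  · rintro ⟨h1, h2⟩
    exact connFin4 S hS h1 h2
  · intro hconn
    constructor
    · rintro rfl
      exact not_conn_02 (x := 0) (y := 2) (by decide) (by decide) (by decide)
        (fun h => absurd (adj_inl_inl.mp h) (by decide)) (by decide) hconn
    · rintro rfl
      exact not_conn_02 (x := 1) (y := 3) (by decide) (by decide) (by decide)
        (fun h => absurd (adj_inl_inl.mp h) (by decide)) (by decide) hconn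

end inst4

lemma sum_desc_succ (n : ℕ) :
    ∑ a ∈ Finset.range (n + 1), (n + 1 - a) = (∑ a ∈ Finset.range n, (n - a)) + (n + 1) := by
  rw [Finset.sum_range_succ]
  have h : ∀ a ∈ Finset.range n, n + 1 - a = (n - a) + 1 := fun a ha => by
    rw [Finset.mem_range] at ha; omega
  rw [Finset.sum_congr rfl h, Finset.sum_add_distrib]
  simp [Finset.card_range]
  omega

/-- For `n = 4m + 2`, comparing `Δ_{n,n-4}` (triangle with pendant paths of `m, m` new
vertices at `v2`, `m` at `v1`, `m-1` at `v0`) and `Ω_{n,n-4}` (4-cycle with pendant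
paths of `m, m, m-1, m-1` new vertices at `v0, v1, v2, v3`):
`N(Ω) - N(Δ) = m(m² + m - 1) > 0`. -/
theorem numCIS_Omega_sub_Delta_4m2 (m : ℕ) (hm : 1 ≤ m) :
    numCIS (cyclePendants 3 4 ![2, 2, 1, 0] ![m, m, m, m - 1]) <
      numCIS (cyclePendants 4 4 ![0, 1, 2, 3] ![m, m, m - 1, m - 1]) ∧
    numCIS (cyclePendants 4 4 ![0, 1, 2, 3] ![m, m, m - 1, m - 1]) =
      numCIS (cyclePendants 3 4 ![2, 2, 1, 0] ![m, m, m, m - 1]) +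
        m * (m * m + m - 1) := by
  obtain ⟨w, rfl⟩ : ∃ w, m = w + 1 := ⟨m - 1, by omega⟩
  rw [count_formula (fun S : Finset (Fin 3) => S.Nonempty) hCC3,
      count_formula (fun S : Finset (Fin 4) => S ≠ {0, 2} ∧ S ≠ {1, 3}) hCC4]
  have d3 : (Finset.univ.filter fun S : Finset (Fin 3) => S.Nonempty ∧ S.Nonempty) =
      ({{0}, {1}, {2}, {0, 1}, {0, 2}, {1, 2}, {0, 1, 2}} :
        Finset (Finset (Fin 3))) := by decide
  have d4 : (Finset.univ.filter fun S : Finset (Fin 4) =>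
      S.Nonempty ∧ (S ≠ {0, 2} ∧ S ≠ {1, 3})) =
      ({{0}, {1}, {2}, {3}, {0, 1}, {0, 3}, {1, 2}, {2, 3}, {0, 1, 2}, {0, 1, 3},
        {0, 2, 3}, {1, 2, 3}, {0, 1, 2, 3}} : Finset (Finset (Fin 4))) := by decide
  rw [d3, d4]
  simp (config := { decide := true }) only [Fin.sum_univ_four, Fin.prod_univ_four,
    Matrix.cons_val_zero, Matrix.cons_val_one, Matrix.head_cons, Matrix.cons_val_two,
    Matrix.tail_cons, Matrix.cons_val_three, Nat.add_sub_cancel,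
    Finset.sum_insert, Finset.mem_insert, Finset.mem_singleton, Finset.sum_singleton,
    if_true, if_false]
  rw [sum_desc_succ w]
  have hsub : (w + 1) * ((w + 1) * (w + 1) + (w + 1) - 1) = (w + 1) * ((w + 1) * (w + 1) + w) := by
    have : (w + 1) * (w + 1) + (w + 1) - 1 = (w + 1) * (w + 1) + w := by omega
    rw [this]
  rw [hsub]
  generalize (∑ a ∈ Finset.range w, (w - a)) = t
  constructor
  · nlinarith [sq_nonneg w]
  · ring
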